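/- Let Q be the n×n real upper bidiagonal Coxian transition rate matrix with entries Q_{k,k} = −λ_{n+1−k} for k = 1,...,n and Q_{k,k+1} = p̄_{n−k}·λ_{n+1−k} for k = 1,...,n−1 (all other entries zero), let p = (1, 0, ..., 0) be the 1×n row vector, and let q = −Q·1 where 1 is the all-ones column vector (so q = (p_{n−1}λ_n, p_{n−2}λ_{n−1}, ..., p_1λ_2, λ_1)^T). Then for every s > 0 the matrix sI − Q is invertible and p·(sI − Q)^{−1}·q = Σ_{i=0}^{n−1} [ a_i · Π_{j=1}^{n−i} λ_{n+1−j}/(s + λ_{n+1−j}) ], where a_i = p_i · Π_{j=1}^{n−1−i} p̄_{j+i}. -/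

import Mathlib

open Matrix

/-- Back-substitution solution of the bidiagonal Coxian system, indexed from
the bottom: `yco t` is the entry of the solution vector at row `n - 1 - t`. -/
noncomputable def yco (lam p : ℕ → ℝ) (s : ℝ) : ℕ → ℝ
  | 0 => lam 1 / (s + lam 1) * p 0
  | (t+1) => lam (t+2) / (s + lam (t+2)) * (p (t+1) + (1 - p (t+1)) * yco lam p s t)

lemma yco_eq (lam p : ℕ → ℝ) (s : ℝ) (hp0 : p 0 = 1) (t : ℕ) :
    yco lam p s t = ∑ r ∈ Finset.range (t+1),
      p r * (∏ m ∈ Finset.Icc (r+1) t, (1 - p m)) *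
        ∏ m ∈ Finset.Icc (r+1) (t+1), lam m / (s + lam m) := by
  induction t with
  | zero => simp [yco, hp0, mul_comm]
  | succ t ih =>
    rw [Finset.sum_range_succ]
    have h1 : ∀ r ∈ Finset.range (t+1),
        p r * (∏ m ∈ Finset.Icc (r+1) (t+1), (1 - p m)) *
          ∏ m ∈ Finset.Icc (r+1) (t+2), lam m / (s + lam m)
        = (lam (t+2)/(s+lam (t+2)) * (1 - p (t+1))) *
          (p r * (∏ m ∈ Finset.Icc (r+1) t, (1 - p m)) *
            ∏ m ∈ Finset.Icc (r+1) (t+1), lam m / (s + lam m)) := by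
      intro r hr
      simp only [Finset.mem_range] at hr
      rw [Finset.prod_Icc_succ_top (by omega : r + 1 ≤ t + 1),
        Finset.prod_Icc_succ_top (by omega : r + 1 ≤ t + 2)]
      ring
    rw [Finset.sum_congr rfl h1, ← Finset.mul_sum, ← ih]
    have h2 : Finset.Icc (t+2) (t+1) = (∅ : Finset ℕ) := by
      rw [Finset.Icc_eq_empty]; omega
    rw [h2]
    rw [Finset.Icc_self]
    simp only [Finset.prod_empty, Finset.prod_singleton, yco]
    ring

/-- Sum over `Fin n` of a function supported on `{j, j+1}`. -/
lemma fin_sum_two {n : ℕ} (j : Fin n) (f : Fin n → ℝ)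
    (hf : ∀ k : Fin n, (k:ℕ) ≠ (j:ℕ) → (k:ℕ) ≠ (j:ℕ)+1 → f k = 0) :
    ∑ k, f k = f j + (if h : (j:ℕ)+1 < n then f ⟨(j:ℕ)+1, h⟩ else 0) := by
  by_cases h : (j:ℕ)+1 < n
  · rw [dif_pos h]
    have hj : j ≠ (⟨(j:ℕ)+1, h⟩ : Fin n) := by
      simp [Fin.ext_iff]
    rw [← Finset.sum_subset (Finset.subset_univ ({j, ⟨(j:ℕ)+1,h⟩} : Finset (Fin n)))
      (fun k _ hk => by
        simp only [Finset.mem_insert, Finset.mem_singleton, not_or] at hk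
        exact hf k (fun e => hk.1 (Fin.ext e)) (fun e => hk.2 (Fin.ext e)))]
    rw [Finset.sum_pair hj]
  · rw [dif_neg h, add_zero]
    exact Finset.sum_eq_single j
      (fun k _ hk => hf k (fun e => hk (Fin.ext e)) (fun e => absurd (e ▸ k.isLt) h))
      (by simp)

/-- Laplace transform of the Coxian density: for every `s > 0`, `sI − Q` is
invertible and `p (sI − Q)⁻¹ q = Σᵢ aᵢ Πⱼ λ_{n+1−j}/(s + λ_{n+1−j})`. -/
theorem coxian_laplace_transform
    (n : ℕ) (hn : 1 ≤ n)
    (lam p : ℕ → ℝ) (hlam : ∀ i, 1 ≤ i → i ≤ n → 0 < lam i)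
    (hp0 : p 0 = 1) (hp : ∀ i, 1 ≤ i → i ≤ n - 1 → 0 < p i ∧ p i < 1)
    (Q : Matrix (Fin n) (Fin n) ℝ)
    (hQ : ∀ j k : Fin n, Q j k =
      if (k : ℕ) = (j : ℕ) then -lam (n - (j : ℕ))
      else if (k : ℕ) = (j : ℕ) + 1 then (1 - p (n - 1 - (j : ℕ))) * lam (n - (j : ℕ))
      else 0)
    (pvec q : Fin n → ℝ)
    (hpvec : ∀ j : Fin n, pvec j = if (j : ℕ) = 0 then 1 else 0)
    (hq : q = -(Q *ᵥ fun _ => 1))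
    (s : ℝ) (hs : 0 < s) :
    IsUnit (s • (1 : Matrix (Fin n) (Fin n) ℝ) - Q) ∧
    pvec ⬝ᵥ ((s • (1 : Matrix (Fin n) (Fin n) ℝ) - Q)⁻¹ *ᵥ q) =
      ∑ i ∈ Finset.range n,
        (p i * ∏ j ∈ Finset.Icc 1 (n - 1 - i), (1 - p (j + i))) *
          ∏ j ∈ Finset.Icc 1 (n - i), lam (n + 1 - j) / (s + lam (n + 1 - j)) := by
  set M := s • (1 : Matrix (Fin n) (Fin n) ℝ) - Q with hM
  -- entries of M
  have hMjk : ∀ j k : Fin n, M j k =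
      if (k:ℕ) = (j:ℕ) then s + lam (n - (j:ℕ))
      else if (k:ℕ) = (j:ℕ)+1 then -((1 - p (n-1-(j:ℕ))) * lam (n - (j:ℕ))) else 0 := by
    intro j k
    have h0 : M j k = s * (if j = k then 1 else 0) - Q j k := by
      simp [hM, Matrix.sub_apply, Matrix.one_apply]
    rw [h0, hQ]
    rcases eq_or_ne ((k:ℕ)) ((j:ℕ)) with h | h
    · have hjk : j = k := Fin.ext h.symm
      simp [h, hjk]
      try ring
    · have hne : j ≠ k := fun e => h (by rw [e])
      simp only [h, if_false, hne, if_neg hne, mul_zero, zero_sub]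
      split_ifs <;> ring
  have hlampos : ∀ j : Fin n, 0 < lam (n - (j:ℕ)) := fun j =>
    hlam _ (by omega) (by omega)
  have hdiagpos : ∀ j : Fin n, 0 < M j j := by
    intro j
    rw [hMjk j j, if_pos rfl]
    exact add_pos hs (hlampos j)
  -- invertibility
  have htri : M.BlockTriangular id := by
    intro j k hk
    have hk' : (k:ℕ) < (j:ℕ) := hk
    rw [hMjk]
    rw [if_neg (by omega), if_neg (by omega)]
  have hdet0 : M.det ≠ 0 := by
    rw [Matrix.det_of_upperTriangular htri]
    exact ne_of_gt (Finset.prod_pos fun j _ => hdiagpos j)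
  have hunit : IsUnit M := (Matrix.isUnit_iff_isUnit_det M).2 (isUnit_iff_ne_zero.2 hdet0)
  refine ⟨hunit, ?_⟩
  -- explicit solution vector
  set x : Fin n → ℝ := fun j => yco lam p s (n - 1 - (j:ℕ)) with hx
  have hsl : ∀ t, 1 ≤ t → t ≤ n → s + lam t ≠ 0 :=
    fun t h1 h2 => ne_of_gt (add_pos hs (hlam t h1 h2))
  -- M *ᵥ x = q
  have hMx : M *ᵥ x = q := by
    funext j
    have hmv : (M *ᵥ x) j = ∑ k, M j k * x k := by
      simp [Matrix.mulVec, dotProduct]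
    have hqv : q j = -(∑ k, Q j k * 1) := by
      rw [hq]; simp [Matrix.mulVec, dotProduct]
    rw [hmv, hqv,
      fin_sum_two j (fun k => M j k * x k) (fun k h1 h2 => by
        show M j k * x k = 0
        rw [hMjk, if_neg h1, if_neg h2, zero_mul]),
      fin_sum_two j (fun k => Q j k * 1) (fun k h1 h2 => by
        show Q j k * 1 = 0
        rw [hQ, if_neg h1, if_neg h2, zero_mul])]
    rw [hMjk j j, if_pos rfl, hQ j j, if_pos rfl]
    by_cases hj1 : (j:ℕ) + 1 < n
    · rw [dif_pos hj1, dif_pos hj1]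
      have hMj1 : M j ⟨(j:ℕ)+1, hj1⟩ = -((1 - p (n-1-(j:ℕ))) * lam (n - (j:ℕ))) := by
        rw [hMjk]
        rw [if_neg (by simp), if_pos rfl]
      have hQj1 : Q j ⟨(j:ℕ)+1, hj1⟩ = (1 - p (n-1-(j:ℕ))) * lam (n - (j:ℕ)) := by
        rw [hQ]
        rw [if_neg (by simp), if_pos rfl]
      rw [hMj1, hQj1]
      -- now pure arithmetic with yco
      obtain ⟨t, ht⟩ : ∃ t, n - 1 - (j:ℕ) = t + 1 := ⟨n - 2 - (j:ℕ), by omega⟩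
      have hx1 : x j = yco lam p s (t+1) := by rw [hx]; simp only; rw [ht]
      have hx2 : x ⟨(j:ℕ)+1, hj1⟩ = yco lam p s t := by
        rw [hx]; simp only [Fin.val_mk]
        congr 1; omega
      have hnj : n - (j:ℕ) = t + 2 := by omega
      have hnj1 : n - 1 - (j:ℕ) = t + 1 := ht
      rw [hx1, hx2, hnj, hnj1]
      have hne : s + lam (t+2) ≠ 0 := hsl (t+2) (by omega) (by omega)
      show (s + lam (t+2)) * yco lam p s (t+1) +
          -((1 - p (t+1)) * lam (t+2)) * yco lam p s t
        = -(-lam (t+2) * 1 + (1 - p (t+1)) * lam (t+2) * 1)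
      rw [show yco lam p s (t+1)
          = lam (t+2) / (s + lam (t+2)) * (p (t+1) + (1 - p (t+1)) * yco lam p s t)
          from rfl]
      field_simp
      ring
    · rw [dif_neg hj1, dif_neg hj1]
      have hj' : (j:ℕ) = n - 1 := by omega
      have hx1 : x j = yco lam p s 0 := by rw [hx]; simp only; rw [hj']; congr 1; omega
      have hnj : n - (j:ℕ) = 1 := by omega
      rw [hx1, hnj, add_zero, add_zero]
      have hne : s + lam 1 ≠ 0 := hsl 1 le_rfl hn
      rw [show yco lam p s 0 = lam 1 / (s + lam 1) * p 0 from rfl, hp0]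
      field_simp
  -- invert
  have hxq : M⁻¹ *ᵥ q = x := by
    rw [← hMx, Matrix.mulVec_mulVec, Matrix.nonsing_inv_mul M (isUnit_iff_ne_zero.2 hdet0),
      Matrix.one_mulVec]
  rw [hxq]
  -- dot product picks out entry 0
  have hdot : pvec ⬝ᵥ x = x ⟨0, hn⟩ := by
    rw [dotProduct]
    rw [Finset.sum_eq_single (⟨0, hn⟩ : Fin n)
      (fun k _ hk => by
        show pvec k * x k = 0
        rw [hpvec, if_neg (fun e => hk (Fin.ext e)), zero_mul])
      (fun h => absurd (Finset.mem_univ _) h)]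
    rw [hpvec]
    simp
  rw [hdot]
  have hx0 : x ⟨0, hn⟩ = yco lam p s (n-1) := rfl
  rw [hx0, yco_eq lam p s hp0 (n-1), show n - 1 + 1 = n by omega]
  refine Finset.sum_congr rfl (fun i hi => ?_)
  simp only [Finset.mem_range] at hi
  have hA : (∏ j ∈ Finset.Icc 1 (n - 1 - i), (1 - p (j + i)))
      = ∏ m ∈ Finset.Icc (i+1) (n-1), (1 - p m) := by
    refine Finset.prod_nbij' (fun j => j + i) (fun m => m - i) ?_ ?_ ?_ ?_ ?_
    · intro a ha; simp only [Finset.mem_Icc] at *; omega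
    · intro a ha; simp only [Finset.mem_Icc] at *; omega
    · intro a ha; omega
    · intro a ha; simp only [Finset.mem_Icc] at ha; omega
    · intro a ha; rfl
  have hB : (∏ j ∈ Finset.Icc 1 (n - i), lam (n + 1 - j) / (s + lam (n + 1 - j)))
      = ∏ m ∈ Finset.Icc (i+1) n, lam m / (s + lam m) := by
    refine Finset.prod_nbij' (fun j => n + 1 - j) (fun m => n + 1 - m) ?_ ?_ ?_ ?_ ?_
    · intro a ha; simp only [Finset.mem_Icc] at *; omega
    · intro a ha; simp only [Finset.mem_Icc] at *; omega
    · intro a ha; simp only [Finset.mem_Icc] at ha; omega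
    · intro a ha; simp only [Finset.mem_Icc] at ha; omega
    · intro a ha; rfl
  rw [hA, hB]
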